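/- Let h: ℝ^d → (-∞,+∞] be of Legendre type, g proper closed convex with int(dom h) ∩ dom g ≠ ∅, x̄ ∈ int(dom h), and assume g is coercive and bounded below while D_h(·, x̄) is proper, closed, convex and bounded below. Then the Bregman proximal operator prox_g^h(x̄) := argmin_x { g(x) + D_h(x, x̄) } is a well-defined singleton contained in int(dom h) ∩ dom g. -/

import Mathlib

open scoped RealInnerProductSpace
open Filter Topology

variable {d : ℕ}

/-- Effective domain. -/
def edom (φ : EuclideanSpace ℝ (Fin d) → EReal) : Set (EuclideanSpace ℝ (Fin d)) :=
  {x | φ x ≠ ⊤}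

/-- Finite real-valued representative. -/
noncomputable def fin (φ : EuclideanSpace ℝ (Fin d) → EReal) :
    EuclideanSpace ℝ (Fin d) → ℝ := fun x => (φ x).toReal

/-- Essential smoothness. -/
def EssentiallySmooth (φ : EuclideanSpace ℝ (Fin d) → EReal) : Prop :=
  (interior (edom φ)).Nonempty ∧
  (∀ x ∈ interior (edom φ), DifferentiableAt ℝ (fin φ) x) ∧
  (∀ (x : ℕ → EuclideanSpace ℝ (Fin d)) (x' : EuclideanSpace ℝ (Fin d)),
    (∀ k, x k ∈ interior (edom φ)) → Tendsto x atTop (𝓝 x') →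
      x' ∈ frontier (edom φ) →
        Tendsto (fun k => ‖gradient (fin φ) (x k)‖) atTop atTop)

/-- Legendre type. -/
def LegendreType (φ : EuclideanSpace ℝ (Fin d) → EReal) : Prop :=
  EssentiallySmooth φ ∧ StrictConvexOn ℝ (interior (edom φ)) (fin φ)

/-- Convexity of an extended-real-valued function. -/
def IsConvexFn (φ : EuclideanSpace ℝ (Fin d) → EReal) : Prop :=
  ∀ x y : EuclideanSpace ℝ (Fin d), ∀ a b : ℝ, 0 ≤ a → 0 ≤ b → a + b = 1 →
    φ (a • x + b • y) ≤ (a : EReal) * φ x + (b : EReal) * φ y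

/-- The (extended-real-valued) Bregman distance `D_h(x, x̄)`. -/
noncomputable def bregmanD (h : EuclideanSpace ℝ (Fin d) → EReal)
    (x xbar : EuclideanSpace ℝ (Fin d)) : EReal :=
  h x - (((h xbar).toReal : ℝ) : EReal) -
    ((⟪gradient (fin h) xbar, x - xbar⟫ : ℝ) : EReal)

lemma combo_le {φ : EuclideanSpace ℝ (Fin d) → EReal}
    (hconv : IsConvexFn φ) (hbot : ∀ x, φ x ≠ ⊥) {x y : EuclideanSpace ℝ (Fin d)} {a b : ℝ}
    (hx : x ∈ edom φ) (hy : y ∈ edom φ) (ha : 0 ≤ a) (hb : 0 ≤ b) (hab : a + b = 1) :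
    φ (a • x + b • y) ≤ ((a * fin φ x + b * fin φ y : ℝ) : EReal) := by
  have h1 : φ x = ((fin φ x : ℝ) : EReal) := (EReal.coe_toReal hx (hbot x)).symm
  have h2 : φ y = ((fin φ y : ℝ) : EReal) := (EReal.coe_toReal hy (hbot y)).symm
  have := hconv x y a b ha hb hab
  rwa [h1, h2, ← EReal.coe_mul, ← EReal.coe_mul, ← EReal.coe_add] at this

lemma combo_mem_edom {φ : EuclideanSpace ℝ (Fin d) → EReal}
    (hconv : IsConvexFn φ) (hbot : ∀ x, φ x ≠ ⊥) {x y : EuclideanSpace ℝ (Fin d)} {a b : ℝ}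
    (hx : x ∈ edom φ) (hy : y ∈ edom φ) (ha : 0 ≤ a) (hb : 0 ≤ b) (hab : a + b = 1) :
    a • x + b • y ∈ edom φ :=
  ((combo_le hconv hbot hx hy ha hb hab).trans_lt (EReal.coe_lt_top _)).ne

lemma combo_fin_le {φ : EuclideanSpace ℝ (Fin d) → EReal}
    (hconv : IsConvexFn φ) (hbot : ∀ x, φ x ≠ ⊥) {x y : EuclideanSpace ℝ (Fin d)} {a b : ℝ}
    (hx : x ∈ edom φ) (hy : y ∈ edom φ) (ha : 0 ≤ a) (hb : 0 ≤ b) (hab : a + b = 1) :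
    fin φ (a • x + b • y) ≤ a * fin φ x + b * fin φ y := by
  have := combo_le hconv hbot hx hy ha hb hab
  have h3 := EReal.toReal_le_toReal this (hbot _) (EReal.coe_ne_top _)
  rw [EReal.toReal_coe] at h3; exact h3

lemma edom_convex {φ : EuclideanSpace ℝ (Fin d) → EReal}
    (hconv : IsConvexFn φ) (hbot : ∀ x, φ x ≠ ⊥) : Convex ℝ (edom φ) :=
  fun _ hx _ hy _ _ ha hb hab => combo_mem_edom hconv hbot hx hy ha hb hab

lemma fin_convexOn {φ : EuclideanSpace ℝ (Fin d) → EReal}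
    (hconv : IsConvexFn φ) (hbot : ∀ x, φ x ≠ ⊥) {s : Set (EuclideanSpace ℝ (Fin d))}
    (hs : Convex ℝ s) (hsub : s ⊆ edom φ) : ConvexOn ℝ s (fin φ) :=
  ⟨hs, fun _ hx _ hy _ _ ha hb hab => combo_fin_le hconv hbot (hsub hx) (hsub hy) ha hb hab⟩

lemma bregmanD_eq (h : EuclideanSpace ℝ (Fin d) → EReal) (hbot : ∀ x, h x ≠ ⊥)
    {x : EuclideanSpace ℝ (Fin d)} (hx : x ∈ edom h) (xbar : EuclideanSpace ℝ (Fin d)) :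
    bregmanD h x xbar
      = ((fin h x - fin h xbar - ⟪gradient (fin h) xbar, x - xbar⟫ : ℝ) : EReal) := by
  have h1 : h x = ((fin h x : ℝ) : EReal) := (EReal.coe_toReal hx (hbot x)).symm
  rw [bregmanD, h1]
  rw [← EReal.coe_sub, ← EReal.coe_sub]
  rfl

lemma bregmanD_top (h : EuclideanSpace ℝ (Fin d) → EReal)
    {x : EuclideanSpace ℝ (Fin d)} (hx : x ∉ edom h) (xbar : EuclideanSpace ℝ (Fin d)) :
    bregmanD h x xbar = ⊤ := by
  have : h x = ⊤ := not_not.mp hx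
  rw [bregmanD, this, EReal.top_sub_coe, EReal.top_sub_coe]

lemma bregmanD_ne_top (h : EuclideanSpace ℝ (Fin d) → EReal) (hbot : ∀ x, h x ≠ ⊥)
    {x : EuclideanSpace ℝ (Fin d)} (xbar : EuclideanSpace ℝ (Fin d)) :
    bregmanD h x xbar ≠ ⊤ ↔ x ∈ edom h := by
  constructor
  · intro hD
    by_contra hx
    exact hD (bregmanD_top h hx xbar)
  · intro hx
    rw [bregmanD_eq h hbot hx xbar]
    exact EReal.coe_ne_top _

lemma grad_ineq {φ : EuclideanSpace ℝ (Fin d) → EReal}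
    (hconv : IsConvexFn φ) (hbot : ∀ x, φ x ≠ ⊥)
    {p y : EuclideanSpace ℝ (Fin d)}
    (hdiff : DifferentiableAt ℝ (fin φ) p)
    (hp : p ∈ edom φ) (hy : y ∈ edom φ) :
    fin φ p + ⟪gradient (fin φ) p, y - p⟫ ≤ fin φ y := by
  set q : ℝ → ℝ := fun τ => fin φ (p + τ • (y - p)) with hq
  have hpt : ∀ τ : ℝ, p + τ • (y - p) = (1 - τ) • p + τ • y := by
    intro τ; module
  have hmem : ∀ τ ∈ Set.Icc (0:ℝ) 1, p + τ • (y - p) ∈ edom φ := by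
    intro τ hτ
    rw [hpt]
    exact combo_mem_edom hconv hbot hp hy (by linarith [hτ.2]) hτ.1 (by ring)
  have hqconv : ConvexOn ℝ (Set.Icc (0:ℝ) 1) q := by
    refine ⟨convex_Icc 0 1, fun τ₁ hτ₁ τ₂ hτ₂ a b ha hb hab => ?_⟩
    have hcombo : p + (a * τ₁ + b * τ₂) • (y - p)
        = a • (p + τ₁ • (y - p)) + b • (p + τ₂ • (y - p)) := by
      have h1 : a + b = 1 := hab
      match_scalars <;> nlinarith [h1]
    simp only [hq, smul_eq_mul]
    rw [hcombo]
    exact combo_fin_le hconv hbot (hmem _ hτ₁) (hmem _ hτ₂) ha hb hab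
  have hline : HasDerivAt (fun τ : ℝ => p + τ • (y - p)) (y - p) 0 := by
    simpa using ((hasDerivAt_id (0:ℝ)).smul_const (y - p)).const_add p
  have hgrad : HasGradientAt (fin φ) (gradient (fin φ) p) p := hdiff.hasGradientAt
  have hfd : HasFDerivAt (fin φ) (InnerProductSpace.toDual ℝ _ (gradient (fin φ) p)) p :=
    hasGradientAt_iff_hasFDerivAt.mp hgrad
  have hq0 : HasDerivAt q (⟪gradient (fin φ) p, y - p⟫ : ℝ) 0 := by
    have hfd' : HasFDerivAt (fin φ) (InnerProductSpace.toDual ℝ _ (gradient (fin φ) p))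
        (p + (0:ℝ) • (y - p)) := by simpa using hfd
    have := hfd'.comp_hasDerivAt 0 hline
    simp only [InnerProductSpace.toDual_apply_apply] at this
    convert this using 1 <;> rfl
  have hslope := hqconv.le_slope_of_hasDerivAt (by simp) (by simp)
      (by norm_num : (0:ℝ) < 1) hq0
  rw [slope_def_field] at hslope
  have hq1 : q 1 = fin φ y := by simp [hq]
  have hq0' : q 0 = fin φ p := by simp [hq]
  rw [hq1, hq0'] at hslope
  simp only [sub_zero, div_one] at hslope
  linarith

lemma min_mem (h g : EuclideanSpace ℝ (Fin d) → EReal) (xbar : EuclideanSpace ℝ (Fin d))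
    (hh_prop : ∀ x, h x ≠ ⊥) (hh_conv : IsConvexFn h) (hh_leg : LegendreType h)
    (hgbot : ∀ x, g x ≠ ⊥) (hg_conv : IsConvexFn g)
    (hDbot : ∀ x, bregmanD h x xbar ≠ ⊥)
    {x0 : EuclideanSpace ℝ (Fin d)} (hx0i : x0 ∈ interior (edom h)) (hx0g : x0 ∈ edom g)
    (w : EuclideanSpace ℝ (Fin d))
    (hmin : ∀ z, g w + bregmanD h w xbar ≤ g z + bregmanD h z xbar) :
    w ∈ interior (edom h) ∩ edom g := by
  have hx0h : x0 ∈ edom h := interior_subset hx0i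
  -- F w is not ⊤
  have hFx0 : g x0 + bregmanD h x0 xbar ≠ ⊤ :=
    (EReal.add_lt_top hx0g ((bregmanD_ne_top h hh_prop xbar).mpr hx0h)).ne
  have hFw : g w + bregmanD h w xbar ≠ ⊤ := ne_top_of_le_ne_top hFx0 (hmin x0)
  have hw_g : w ∈ edom g := by
    intro hgw
    apply hFw
    rw [hgw, EReal.top_add_of_ne_bot (hDbot w)]
  have hw_D : bregmanD h w xbar ≠ ⊤ := by
    intro hDw
    apply hFw
    rw [hDw, EReal.add_top_of_ne_bot (hgbot w)]
  have hw_h : w ∈ edom h := (bregmanD_ne_top h hh_prop xbar).mp hw_D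
  refine ⟨?_, hw_g⟩
  by_contra hni
  have hfront : w ∈ frontier (edom h) := ⟨subset_closure hw_h, hni⟩
  have hdiff := hh_leg.1.2.1
  -- the sequence
  set t : ℕ → ℝ := fun k => 1 / ((k : ℝ) + 1) with ht
  have htpos : ∀ k, 0 < t k := fun k => by positivity
  have htle1 : ∀ k, t k ≤ 1 := fun k => by
    rw [ht]; rw [div_le_one (by positivity)]; simp
  set xk : ℕ → EuclideanSpace ℝ (Fin d) := fun k => t k • x0 + (1 - t k) • w with hxk
  have hxk_int : ∀ k, xk k ∈ interior (edom h) := fun k =>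
    (edom_convex hh_conv hh_prop).combo_interior_closure_mem_interior hx0i
      (subset_closure hw_h) (htpos k) (by linarith [htle1 k]) (by ring)
  have hxk_edomh : ∀ k, xk k ∈ edom h := fun k => interior_subset (hxk_int k)
  have htk0 : Tendsto t atTop (𝓝 0) := tendsto_one_div_add_atTop_nhds_zero_nat
  have hxk_tend : Tendsto xk atTop (𝓝 w) := by
    have h2 : Tendsto (fun k => 1 - t k) atTop (𝓝 (1 - 0)) :=
      tendsto_const_nhds.sub htk0
    have h1 : Tendsto (fun k => t k • x0 + (1 - t k) • w) atTop
        (𝓝 ((0 : ℝ) • x0 + ((1 : ℝ) - 0) • w)) :=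
      (htk0.smul_const x0).add (h2.smul_const w)
    simpa using h1
  have hblow := hh_leg.1.2.2 xk w hxk_int hxk_tend hfront
  -- ball around x0
  obtain ⟨ε, hε, hball⟩ := Metric.isOpen_iff.mp isOpen_interior x0 hx0i
  set s : ℝ := ε / 2 with hs
  have hspos : 0 < s := by positivity
  have hcb : Metric.closedBall x0 s ⊆ interior (edom h) :=
    (Metric.closedBall_subset_ball (by linarith)).trans hball
  -- uniform bound on fin h over the closed ball
  have hconvOn : ConvexOn ℝ (Metric.ball x0 ε) (fin h) :=
    fin_convexOn hh_conv hh_prop (convex_ball x0 ε)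
      ((Metric.ball_subset_ball le_rfl).trans (hball.trans interior_subset))
  have hcont : ContinuousOn (fin h) (Metric.ball x0 ε) :=
    hconvOn.continuousOn Metric.isOpen_ball
  obtain ⟨zM, hzM, hM⟩ := (isCompact_closedBall x0 s).exists_isMaxOn
    ⟨x0, Metric.mem_closedBall_self hspos.le⟩
    (hcont.mono (Metric.closedBall_subset_ball (by linarith)))
  set M : ℝ := fin h zM with hMdef
  -- constant from minimality
  set C : ℝ := fin g x0 - fin g w - ⟪gradient (fin h) xbar, x0 - w⟫ with hC
  have hlow : ∀ k, fin h w - C * t k ≤ fin h (xk k) := by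
    intro k
    have hxk_edomg : xk k ∈ edom g :=
      combo_mem_edom hg_conv hgbot hx0g hw_g (htpos k).le (by linarith [htle1 k]) (by ring)
    have e2 : fin g (xk k) ≤ t k * fin g x0 + (1 - t k) * fin g w :=
      combo_fin_le hg_conv hgbot hx0g hw_g (htpos k).le (by linarith [htle1 k]) (by ring)
    have e1 := hmin (xk k)
    rw [bregmanD_eq h hh_prop hw_h xbar, bregmanD_eq h hh_prop (hxk_edomh k) xbar,
      ← EReal.coe_toReal hw_g (hgbot w), ← EReal.coe_toReal hxk_edomg (hgbot _),
      ← EReal.coe_add, ← EReal.coe_add, EReal.coe_le_coe_iff] at e1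
    have hsub : xk k - xbar = (w - xbar) + t k • (x0 - w) := by
      rw [hxk]; module
    rw [hsub, inner_add_right, real_inner_smul_right] at e1
    have : (fin g w : ℝ) = (g w).toReal := rfl
    simp only [fin] at e1 e2 ⊢
    rw [hC]
    simp only [fin]
    linarith
  -- the uniform gradient bound
  set B : ℝ := max 0 ((M - fin h w + C) / s) with hB
  have hbound : ∀ k, ‖gradient (fin h) (xk k)‖ ≤ B := by
    intro k
    set G : EuclideanSpace ℝ (Fin d) := gradient (fin h) (xk k) with hG
    by_cases hG0 : G = 0
    · rw [hG0]; simp [hB]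
    · set v : EuclideanSpace ℝ (Fin d) := ‖G‖⁻¹ • G with hv
      have hGnorm : (0:ℝ) < ‖G‖ := norm_pos_iff.mpr hG0
      have hvnorm : ‖v‖ = 1 := by
        rw [hv, norm_smul, norm_inv, norm_norm, inv_mul_cancel₀ hGnorm.ne']
      set y : EuclideanSpace ℝ (Fin d) := x0 + s • v with hy
      have hy_ball : y ∈ Metric.closedBall x0 s := by
        rw [Metric.mem_closedBall, dist_eq_norm, hy]
        simp [norm_smul, hvnorm, abs_of_pos hspos]
      have hy_int : y ∈ interior (edom h) := hcb hy_ball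
      have hy_edom : y ∈ edom h := interior_subset hy_int
      set z : EuclideanSpace ℝ (Fin d) := t k • y + (1 - t k) • w with hz
      have hz_edom : z ∈ edom h :=
        combo_mem_edom hh_conv hh_prop hy_edom hw_h (htpos k).le (by linarith [htle1 k]) (by ring)
      have hup : fin h z ≤ t k * fin h y + (1 - t k) * fin h w :=
        combo_fin_le hh_conv hh_prop hy_edom hw_h (htpos k).le (by linarith [htle1 k]) (by ring)
      have hyM : fin h y ≤ M := hM hy_ball
      have hgi := grad_ineq hh_conv hh_prop (hdiff _ (hxk_int k)) (hxk_edomh k) hz_edom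
      have hzsub : z - xk k = (t k * s) • v := by
        rw [hz, hxk, hy]; module
      rw [hzsub, real_inner_smul_right] at hgi
      have hGv : ⟪G, v⟫ = ‖G‖ := by
        rw [hv, real_inner_smul_right, real_inner_self_eq_norm_sq, pow_two]
        field_simp
      rw [← hG, hGv] at hgi
      have hkey : t k * (s * ‖G‖) ≤ t k * (M - fin h w + C) := by
        have h1 := mul_le_mul_of_nonneg_left hyM (htpos k).le
        have h2 := hlow k
        nlinarith
      have hkey2 : s * ‖G‖ ≤ M - fin h w + C := le_of_mul_le_mul_left hkey (htpos k)
      have : ‖G‖ ≤ (M - fin h w + C) / s := (le_div_iff₀ hspos).mpr (by linarith)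
      exact this.trans (le_max_right _ _)
  obtain ⟨k, hk⟩ := (hblow.eventually_gt_atTop B).exists
  exact absurd (hbound k) (not_le.mpr hk)

lemma min_unique (h g : EuclideanSpace ℝ (Fin d) → EReal) (xbar : EuclideanSpace ℝ (Fin d))
    (hh_prop : ∀ x, h x ≠ ⊥)
    (hh_conv : IsConvexFn h)
    (hstrict : StrictConvexOn ℝ (interior (edom h)) (fin h))
    (hgbot : ∀ x, g x ≠ ⊥) (hg_conv : IsConvexFn g)
    (w1 w2 : EuclideanSpace ℝ (Fin d))
    (hm1 : ∀ z, g w1 + bregmanD h w1 xbar ≤ g z + bregmanD h z xbar)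
    (hm2 : ∀ z, g w2 + bregmanD h w2 xbar ≤ g z + bregmanD h z xbar)
    (hw1 : w1 ∈ interior (edom h) ∩ edom g)
    (hw2 : w2 ∈ interior (edom h) ∩ edom g) : w1 = w2 := by
  by_contra hne
  set m : EuclideanSpace ℝ (Fin d) := (1/2 : ℝ) • w1 + (1/2 : ℝ) • w2 with hm
  have hm_int : m ∈ interior (edom h) :=
    ((edom_convex hh_conv hh_prop).interior) hw1.1 hw2.1 (by norm_num) (by norm_num)
      (by norm_num)
  have hm_h : m ∈ edom h := interior_subset hm_int
  have hm_g : m ∈ edom g :=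
    combo_mem_edom hg_conv hgbot hw1.2 hw2.2 (by norm_num) (by norm_num) (by norm_num)
  have hgm : fin g m ≤ (1/2 : ℝ) * fin g w1 + (1/2 : ℝ) * fin g w2 :=
    combo_fin_le hg_conv hgbot hw1.2 hw2.2 (by norm_num) (by norm_num) (by norm_num)
  have hhm : fin h m < (1/2 : ℝ) * fin h w1 + (1/2 : ℝ) * fin h w2 :=
    hstrict.2 hw1.1 hw2.1 hne (by norm_num) (by norm_num) (by norm_num)
  -- inner product splits
  have hsub : m - xbar = (1/2 : ℝ) • (w1 - xbar) + (1/2 : ℝ) • (w2 - xbar) := by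
    rw [hm]; module
  have hinner : ⟪gradient (fin h) xbar, m - xbar⟫
      = (1/2 : ℝ) * ⟪gradient (fin h) xbar, w1 - xbar⟫
        + (1/2 : ℝ) * ⟪gradient (fin h) xbar, w2 - xbar⟫ := by
    rw [hsub, inner_add_right, real_inner_smul_right, real_inner_smul_right]
  -- equality of the two minimal values
  have heq : g w1 + bregmanD h w1 xbar = g w2 + bregmanD h w2 xbar :=
    le_antisymm (hm1 w2) (hm2 w1)
  -- compare at m
  have h1 := hm1 m
  rw [bregmanD_eq h hh_prop (interior_subset hw1.1) xbar,
    bregmanD_eq h hh_prop hm_h xbar,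
    ← EReal.coe_toReal hw1.2 (hgbot w1), ← EReal.coe_toReal hm_g (hgbot m),
    ← EReal.coe_add, ← EReal.coe_add, EReal.coe_le_coe_iff] at h1
  rw [bregmanD_eq h hh_prop (interior_subset hw1.1) xbar,
    bregmanD_eq h hh_prop (interior_subset hw2.1) xbar,
    ← EReal.coe_toReal hw1.2 (hgbot w1), ← EReal.coe_toReal hw2.2 (hgbot w2),
    ← EReal.coe_add, ← EReal.coe_add, EReal.coe_eq_coe_iff] at heq
  rw [hinner] at h1
  simp only [fin] at h1 hgm hhm heq
  linarith

/-- Well-definedness of the Bregman proximal operator: under the stated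
assumptions, `argmin_x { g(x) + D_h(x, x̄) }` is a singleton contained in
`int dom h ∩ dom g`. -/
theorem bregman_prox_well_defined
    (h g : EuclideanSpace ℝ (Fin d) → EReal)
    (hh_prop : ∀ x, h x ≠ ⊥) (hh_closed : LowerSemicontinuous h)
    (hh_conv : IsConvexFn h) (hh_leg : LegendreType h)
    (hg_prop : (∀ x, g x ≠ ⊥) ∧ (edom g).Nonempty)
    (hg_closed : LowerSemicontinuous g) (hg_conv : IsConvexFn g)
    (hdom : (interior (edom h) ∩ edom g).Nonempty)
    (xbar : EuclideanSpace ℝ (Fin d)) (hxbar : xbar ∈ interior (edom h))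
    (hg_coercive : ∀ M : ℝ, ∃ R : ℝ, ∀ x, R ≤ ‖x‖ → (M : EReal) ≤ g x)
    (hg_bdd : ∃ m : ℝ, ∀ x, (m : EReal) ≤ g x)
    (hD_prop : (∀ x, bregmanD h x xbar ≠ ⊥) ∧ {x | bregmanD h x xbar ≠ ⊤}.Nonempty)
    (hD_closed : LowerSemicontinuous (fun x => bregmanD h x xbar))
    (hD_conv : IsConvexFn (fun x => bregmanD h x xbar))
    (hD_bdd : ∃ m : ℝ, ∀ x, (m : EReal) ≤ bregmanD h x xbar) :
    ∃ xplus : EuclideanSpace ℝ (Fin d),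
      (∀ x, g xplus + bregmanD h xplus xbar ≤ g x + bregmanD h x xbar) ∧
      xplus ∈ interior (edom h) ∩ edom g ∧
      (∀ x, (∀ z, g x + bregmanD h x xbar ≤ g z + bregmanD h z xbar) → x = xplus) := by
  obtain ⟨x0, hx0i, hx0g⟩ := hdom
  obtain ⟨hgbot, hgdom⟩ := hg_prop
  obtain ⟨hDbot, hDdom⟩ := hD_prop
  obtain ⟨mg, hmg⟩ := hg_bdd
  obtain ⟨mD, hmD⟩ := hD_bdd
  set F : EuclideanSpace ℝ (Fin d) → EReal := fun z => g z + bregmanD h z xbar with hFdef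
  have hFbot : ∀ z, F z ≠ ⊥ := by
    intro z hz
    rcases EReal.add_eq_bot_iff.mp hz with h' | h'
    exacts [hgbot z h', hDbot z h']
  have hx0h : x0 ∈ edom h := interior_subset hx0i
  have hFx0top : F x0 ≠ ⊤ :=
    (EReal.add_lt_top hx0g ((bregmanD_ne_top h hh_prop xbar).mpr hx0h)).ne
  have hFlsc : LowerSemicontinuous F :=
    hg_closed.add' hD_closed fun x =>
      EReal.continuousAt_add (Or.inr (hDbot x)) (Or.inl (hgbot x))
  set c0 : ℝ := (F x0).toReal with hc0
  have hFx0eq : F x0 = (c0 : EReal) := (EReal.coe_toReal hFx0top (hFbot x0)).symm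
  obtain ⟨R, hR⟩ := hg_coercive (c0 - mD + 1)
  set S : Set (EuclideanSpace ℝ (Fin d)) := {z | F z ≤ F x0} with hSdef
  have hS_closed : IsClosed S := hFlsc.isClosed_preimage (F x0)
  have hS_sub : S ⊆ Metric.closedBall 0 (max R 0) := by
    intro z hz
    rw [Metric.mem_closedBall, dist_zero_right]
    by_contra hout
    have hRz : R ≤ ‖z‖ := le_of_lt (lt_of_le_of_lt (le_max_left R 0) (not_le.mp hout))
    have h1 : ((c0 - mD + 1 : ℝ) : EReal) ≤ g z := hR z hRz
    have h2 : ((c0 - mD + 1 : ℝ) : EReal) + ((mD : ℝ) : EReal) ≤ F z :=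
      add_le_add h1 (hmD z)
    have h3 : ((c0 + 1 : ℝ) : EReal) ≤ F z := by
      rw [← EReal.coe_add] at h2
      convert h2 using 2
      ring
    have h4 : F z ≤ ((c0 : ℝ) : EReal) := hFx0eq ▸ hz
    have := le_trans h3 h4
    rw [EReal.coe_le_coe_iff] at this
    linarith
  have hS_cpt : IsCompact S :=
    Metric.isCompact_of_isClosed_isBounded hS_closed
      (Metric.isBounded_closedBall.subset hS_sub)
  have hx0S : x0 ∈ S := by simp only [hSdef, Set.mem_setOf_eq]; exact le_refl _
  have hFztop : ∀ z ∈ S, F z ≠ ⊤ := fun z hz => ne_top_of_le_ne_top hFx0top hz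
  set r : EuclideanSpace ℝ (Fin d) → ℝ := fun z => (F z).toReal with hrdef
  have hFrealS : ∀ z ∈ S, F z = ((r z : ℝ) : EReal) := fun z hz =>
    (EReal.coe_toReal (hFztop z hz) (hFbot z)).symm
  have hAbdd : BddBelow (r '' S) := by
    refine ⟨mg + mD, ?_⟩
    rintro v ⟨z, hzS, rfl⟩
    have h1 : ((mg + mD : ℝ) : EReal) ≤ F z := by
      rw [EReal.coe_add]; exact add_le_add (hmg z) (hmD z)
    have := EReal.toReal_le_toReal h1 (EReal.coe_ne_bot _) (hFztop z hzS)
    rw [EReal.toReal_coe] at this; exact this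
  have hAne : (r '' S).Nonempty := ⟨r x0, x0, hx0S, rfl⟩
  set A : ℝ := sInf (r '' S) with hAdef
  set T : ℕ → Set (EuclideanSpace ℝ (Fin d)) :=
    fun n => {z | z ∈ S ∧ F z ≤ ((A + 1 / ((n : ℝ) + 1) : ℝ) : EReal)} with hTdef
  have hTcl : ∀ n, IsClosed (T n) := fun n =>
    hS_closed.inter (hFlsc.isClosed_preimage _)
  have hTne : ∀ n, (T n).Nonempty := by
    intro n
    have hlt : A < A + 1 / ((n : ℝ) + 1) := by
      have : (0:ℝ) < 1 / ((n : ℝ) + 1) := by positivity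
      linarith
    obtain ⟨v, ⟨z, hzS, rfl⟩, hv⟩ := exists_lt_of_csInf_lt hAne hlt
    exact ⟨z, hzS, by rw [hFrealS z hzS]; exact EReal.coe_le_coe_iff.mpr hv.le⟩
  have hTsub : ∀ n, T (n + 1) ⊆ T n := by
    intro n z hz
    refine ⟨hz.1, le_trans hz.2 (EReal.coe_le_coe_iff.mpr ?_)⟩
    have h1 : ((n : ℝ) + 1) ≤ ((n + 1 : ℕ) : ℝ) + 1 := by push_cast; linarith
    have := one_div_le_one_div_of_le (by positivity : (0:ℝ) < (n : ℝ) + 1) h1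
    linarith
  have hT0cpt : IsCompact (T 0) :=
    hS_cpt.of_isClosed_subset (hTcl 0) fun z hz => hz.1
  obtain ⟨xm, hxm⟩ :=
    IsCompact.nonempty_iInter_of_sequence_nonempty_isCompact_isClosed T hTsub hTne hT0cpt hTcl
  have hxmT : ∀ n, xm ∈ T n := fun n => Set.mem_iInter.mp hxm n
  have hxmS : xm ∈ S := (hxmT 0).1
  have hrxm : r xm ≤ A := by
    by_contra hgt
    have hε : 0 < r xm - A := by linarith [not_le.mp hgt]
    obtain ⟨n, hn⟩ := exists_nat_one_div_lt hε
    have h1 := (hxmT n).2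
    rw [hFrealS xm hxmS, EReal.coe_le_coe_iff] at h1
    linarith
  have hminS : ∀ z, F xm ≤ F z := by
    intro z
    by_cases hzS : z ∈ S
    · have hAz : A ≤ r z := csInf_le hAbdd ⟨z, hzS, rfl⟩
      rw [hFrealS xm hxmS, hFrealS z hzS]
      exact EReal.coe_le_coe_iff.mpr (le_trans hrxm hAz)
    · exact le_trans hxmS (le_of_not_ge hzS)
  refine ⟨xm, hminS, min_mem h g xbar hh_prop hh_conv hh_leg hgbot hg_conv hDbot
    hx0i hx0g xm hminS, fun x hx => min_unique h g xbar hh_prop hh_conv hh_leg.2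
    hgbot hg_conv x xm hx hminS
    (min_mem h g xbar hh_prop hh_conv hh_leg hgbot hg_conv hDbot hx0i hx0g x hx)
    (min_mem h g xbar hh_prop hh_conv hh_leg hgbot hg_conv hDbot hx0i hx0g xm hminS)⟩
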